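/- Let q be real with 0 < q < 1/2, p = 1 − q, and γ ∈ (0,1]. Then ( ∑_{n=0}^∞ p·(pq)^n·C_n·( n + 1 − (1 − (1−γ)^{n+1})/γ ) ) / ( p/(p − q) ) = q/p − ((1 − γ)(p − q))/(γp)·( 1 − p·Ĉ((1−γ)pq) ). Here the numerator is the expected number E[Z] of attacker blocks in the official chain per Equal-Fork Stubborn Mining cycle (since E[Z | L = n+1] = n + 1 − (1 − (1−γ)^{n+1})/γ) and p/(p−q) is E[L], so this is the long-term apparent hashrate of the Equal-Fork Stubborn miner. -/

import Mathlib

open scoped BigOperators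

/-- The `n`-th Catalan number `C_n = (2n)! / (n! * (n+1)!)`, as a real number. -/
noncomputable def catalanC (n : ℕ) : ℝ :=
  (Nat.factorial (2 * n) : ℝ) / ((Nat.factorial n : ℝ) * (Nat.factorial (n + 1) : ℝ))

/-- The value of the Catalan generating series: `Ĉ(x) = (1 - √(1 - 4x)) / (2x)` for
`x ≠ 0` and `Ĉ(0) = 1`. -/
noncomputable def catalanGF (x : ℝ) : ℝ :=
  if x = 0 then 1 else (1 - Real.sqrt (1 - 4 * x)) / (2 * x)

open Finset

lemma catalan_mul_fact (n : ℕ) :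
    catalan n * (Nat.factorial n * Nat.factorial (n + 1)) = Nat.factorial (2 * n) := by
  have h1 := succ_mul_catalan_eq_centralBinom n
  have h2 := Nat.choose_mul_factorial_mul_factorial (Nat.le_mul_of_pos_left n (by norm_num) : n ≤ 2 * n)
  have h3 : 2 * n - n = n := by omega
  rw [h3] at h2
  calc catalan n * (Nat.factorial n * Nat.factorial (n + 1))
      = ((n + 1) * catalan n) * (Nat.factorial n * Nat.factorial n) := by
        rw [Nat.factorial_succ]; ring
    _ = Nat.centralBinom n * Nat.factorial n * Nat.factorial n := by rw [h1]; ring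
    _ = Nat.factorial (2 * n) := by rw [Nat.centralBinom]; exact h2

lemma catalanC_eq (n : ℕ) : catalanC n = (catalan n : ℝ) := by
  have h := catalan_mul_fact n
  have h' : (catalan n : ℝ) * (Nat.factorial n * Nat.factorial (n + 1)) = Nat.factorial (2 * n) := by
    exact_mod_cast congrArg (Nat.cast (R := ℝ)) h
  rw [catalanC, ← h']
  field_simp

lemma catalanC_nonneg (n : ℕ) : 0 ≤ catalanC n := by
  rw [catalanC_eq]; positivity

lemma catalanC_zero : catalanC 0 = 1 := by
  rw [catalanC_eq]; norm_num

lemma centralBinom_le_four_pow (n : ℕ) : Nat.centralBinom n ≤ 4 ^ n := by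
  induction n with
  | zero => simp [Nat.centralBinom]
  | succ n ih =>
    have h := Nat.succ_mul_centralBinom_succ n
    have : (n + 1) * Nat.centralBinom (n + 1) ≤ (n + 1) * (4 * Nat.centralBinom n) := by
      rw [h]; nlinarith [Nat.centralBinom_pos n]
    have := Nat.le_of_mul_le_mul_left this (Nat.succ_pos n)
    calc Nat.centralBinom (n + 1) ≤ 4 * Nat.centralBinom n := this
      _ ≤ 4 * 4 ^ n := by omega
      _ = 4 ^ (n + 1) := by ring

lemma catalanC_le_four_pow (n : ℕ) : catalanC n ≤ 4 ^ n := by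
  rw [catalanC_eq]
  have h1 : catalan n ≤ Nat.centralBinom n := by
    have := succ_mul_catalan_eq_centralBinom n
    exact Nat.le_mul_of_pos_left (catalan n) (Nat.succ_pos n) |>.trans_eq this
  have := le_trans h1 (centralBinom_le_four_pow n)
  exact_mod_cast this

lemma summable_cat {x : ℝ} (hx0 : 0 ≤ x) (hx : x < 1 / 4) :
    Summable (fun n : ℕ => catalanC n * x ^ n) := by
  apply Summable.of_nonneg_of_le (fun n => mul_nonneg (catalanC_nonneg n) (pow_nonneg hx0 n))
    (fun n => ?_) (summable_geometric_of_lt_one (by linarith) (by linarith) : Summable fun n : ℕ => (4 * x) ^ n)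
  calc catalanC n * x ^ n ≤ 4 ^ n * x ^ n := by
        apply mul_le_mul_of_nonneg_right (catalanC_le_four_pow n) (by positivity)
    _ = (4 * x) ^ n := by rw [mul_pow]

lemma summable_cat' {x : ℝ} (hx0 : 0 ≤ x) (hx : x < 1 / 4) :
    Summable (fun n : ℕ => ((n : ℝ) + 1) * catalanC n * x ^ n) := by
  have hr : ‖(4 * x : ℝ)‖ < 1 := by rw [Real.norm_eq_abs, abs_of_nonneg (by linarith)]; linarith
  have hs : Summable (fun n : ℕ => ((n : ℝ) + 1) * (4 * x) ^ n) := by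
    have h1 := summable_pow_mul_geometric_of_norm_lt_one (R := ℝ) 1 hr
    have h2 := summable_geometric_of_lt_one (r := 4 * x) (by linarith) (by linarith)
    simpa [add_mul, pow_one] using h1.add h2
  apply Summable.of_nonneg_of_le (fun n => by have := catalanC_nonneg n; positivity) (fun n => ?_) hs
  have h4 : catalanC n * x ^ n ≤ (4 * x) ^ n := by
    calc catalanC n * x ^ n ≤ 4 ^ n * x ^ n :=
          mul_le_mul_of_nonneg_right (catalanC_le_four_pow n) (by positivity)
      _ = (4 * x) ^ n := by rw [mul_pow]
  calc ((n : ℝ) + 1) * catalanC n * x ^ n = ((n : ℝ) + 1) * (catalanC n * x ^ n) := by ring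
    _ ≤ ((n : ℝ) + 1) * (4 * x) ^ n := by
        apply mul_le_mul_of_nonneg_left h4 (by positivity)

lemma catalanC_succ (n : ℕ) :
    catalanC (n + 1) = ∑ p ∈ antidiagonal n, catalanC p.1 * catalanC p.2 := by
  simp only [catalanC_eq]
  exact_mod_cast congrArg (Nat.cast (R := ℝ)) (catalan_succ' n)

section Conv
variable {x : ℝ} (hx0 : 0 ≤ x)

lemma conv_eq_biUnion (N : ℕ) :
    ∑ n ∈ range N, catalanC (n + 1) * x ^ n =
      ∑ p ∈ (range N).biUnion antidiagonal,
        (catalanC p.1 * x ^ p.1) * (catalanC p.2 * x ^ p.2) := by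
  rw [Finset.sum_biUnion]
  · apply Finset.sum_congr rfl
    intro n _
    rw [catalanC_succ, Finset.sum_mul]
    apply Finset.sum_congr rfl
    intro p hp
    have h : p.1 + p.2 = n := Finset.HasAntidiagonal.mem_antidiagonal.mp hp
    rw [← h, pow_add]; ring
  · intro i _ j _ hij
    simp only [Finset.disjoint_left]
    intro p hpi hpj
    exact hij ((Finset.HasAntidiagonal.mem_antidiagonal.mp hpi).symm.trans (Finset.HasAntidiagonal.mem_antidiagonal.mp hpj))

lemma sq_eq_prod (N : ℕ) :
    (∑ i ∈ range N, catalanC i * x ^ i) ^ 2 =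
      ∑ p ∈ range N ×ˢ range N, (catalanC p.1 * x ^ p.1) * (catalanC p.2 * x ^ p.2) := by
  rw [sq, Finset.sum_mul_sum, ← Finset.sum_product']

include hx0 in
lemma conv_le_sq (N : ℕ) :
    ∑ n ∈ range N, catalanC (n + 1) * x ^ n ≤ (∑ i ∈ range N, catalanC i * x ^ i) ^ 2 := by
  rw [conv_eq_biUnion, sq_eq_prod]
  apply Finset.sum_le_sum_of_subset_of_nonneg
  · intro p hp
    obtain ⟨n, hn, hpn⟩ := Finset.mem_biUnion.mp hp
    have h1 := Finset.HasAntidiagonal.mem_antidiagonal.mp hpn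
    have h2 := Finset.mem_range.mp hn
    exact Finset.mem_product.mpr ⟨Finset.mem_range.mpr (by omega), Finset.mem_range.mpr (by omega)⟩
  · intro p _ _
    have := catalanC_nonneg p.1; have := catalanC_nonneg p.2
    positivity

include hx0 in
lemma sq_le_conv (M : ℕ) :
    (∑ i ∈ range M, catalanC i * x ^ i) ^ 2 ≤
      ∑ n ∈ range (2 * M), catalanC (n + 1) * x ^ n := by
  rw [conv_eq_biUnion, sq_eq_prod]
  apply Finset.sum_le_sum_of_subset_of_nonneg
  · intro p hp
    obtain ⟨h1, h2⟩ := Finset.mem_product.mp hp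
    have h1 := Finset.mem_range.mp h1
    have h2 := Finset.mem_range.mp h2
    exact Finset.mem_biUnion.mpr ⟨p.1 + p.2, Finset.mem_range.mpr (by omega),
      Finset.HasAntidiagonal.mem_antidiagonal.mpr rfl⟩
  · intro p _ _
    have := catalanC_nonneg p.1; have := catalanC_nonneg p.2
    positivity

lemma S_succ (N : ℕ) :
    ∑ i ∈ range (N + 1), catalanC i * x ^ i =
      1 + x * ∑ n ∈ range N, catalanC (n + 1) * x ^ n := by
  rw [Finset.sum_range_succ' (fun i => catalanC i * x ^ i) N, catalanC_zero, Finset.mul_sum]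
  simp only [pow_zero, mul_one, pow_succ]
  rw [add_comm]
  congr 1
  apply Finset.sum_congr rfl
  intro i _; ring

end Conv

lemma catalanGF_tsum {x : ℝ} (hx0 : 0 ≤ x) (hx : x < 1 / 4) :
    ∑' n : ℕ, catalanC n * x ^ n = catalanGF x := by
  rcases eq_or_lt_of_le hx0 with h0 | hx'
  · rw [← h0]
    rw [tsum_eq_single 0 (fun n hn => by
      rw [zero_pow hn, mul_zero])]
    simp [catalanGF, catalanC_zero]
  set s := Real.sqrt (1 - 4 * x) with hs_def
  have hs2 : s ^ 2 = 1 - 4 * x := Real.sq_sqrt (by linarith)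
  have hs0 : 0 < s := Real.sqrt_pos.mpr (by linarith)
  have hs1 : s ≤ 1 := by nlinarith
  set r := (1 - s) / (2 * x) with hr_def
  have hr0 : 0 ≤ r := div_nonneg (by linarith) (by linarith)
  have hrfix : 1 + x * r ^ 2 = r := by
    rw [hr_def]; field_simp; nlinarith
  have hSnn : ∀ N, 0 ≤ ∑ i ∈ range N, catalanC i * x ^ i := by
    intro N
    apply Finset.sum_nonneg
    intro i _
    exact mul_nonneg (catalanC_nonneg i) (pow_nonneg hx0 i)
  have hSle : ∀ N, ∑ i ∈ range N, catalanC i * x ^ i ≤ r := by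
    intro N
    induction N with
    | zero => simpa using hr0
    | succ N ih =>
      rw [S_succ]
      calc 1 + x * ∑ n ∈ range N, catalanC (n + 1) * x ^ n
          ≤ 1 + x * (∑ i ∈ range N, catalanC i * x ^ i) ^ 2 := by
            have := conv_le_sq hx0 (x := x) N
            nlinarith
        _ ≤ 1 + x * r ^ 2 := by
            have := pow_le_pow_left₀ (hSnn N) ih 2
            nlinarith
        _ = r := hrfix
  have hsum := summable_cat hx0 hx
  set g := ∑' n : ℕ, catalanC n * x ^ n with hg_def
  have hgle : g ≤ r := Real.tsum_le_of_sum_range_le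
    (fun n => mul_nonneg (catalanC_nonneg n) (pow_nonneg hx0 n)) hSle
  have hT : Filter.Tendsto (fun N => ∑ i ∈ range N, catalanC i * x ^ i)
      Filter.atTop (nhds g) := hsum.hasSum.tendsto_sum_nat
  have h1 : g ≤ 1 + x * g ^ 2 := by
    apply le_of_tendsto_of_tendsto' (hT.comp (Filter.tendsto_add_atTop_nat 1))
      (((hT.pow 2).const_mul x).const_add 1)
    intro N
    show ∑ i ∈ range (N + 1), catalanC i * x ^ i ≤ _
    rw [S_succ]
    have := conv_le_sq hx0 (x := x) N
    nlinarith
  have h2 : 1 + x * g ^ 2 ≤ g := by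
    apply le_of_tendsto_of_tendsto' (((hT.pow 2).const_mul x).const_add 1)
      (hT.comp (Filter.tendsto_atTop_mono (fun n => by omega : ∀ n : ℕ, n ≤ 2 * n + 1)
        Filter.tendsto_id))
    intro M
    show _ ≤ ∑ i ∈ range (2 * M + 1), catalanC i * x ^ i
    rw [S_succ]
    have := sq_le_conv hx0 (x := x) M
    nlinarith
  have heq : g = 1 + x * g ^ 2 := le_antisymm h1 h2
  have hroot : 2 * x * g - 1 = -s := by
    have hsq : (2 * x * g - 1) ^ 2 = s ^ 2 := by nlinarith
    have hle : 2 * x * g - 1 ≤ -s := by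
      have : 2 * x * r = 1 - s := by rw [hr_def]; field_simp
      nlinarith
    nlinarith
  rw [catalanGF, if_neg (ne_of_gt hx')]
  rw [eq_div_iff (by linarith : (2 : ℝ) * x ≠ 0)]
  linarith

lemma centralBinom_tsum {x : ℝ} (hx0 : 0 < x) (hx : x < 1 / 4) :
    ∑' n : ℕ, ((n : ℝ) + 1) * catalanC n * x ^ n = 1 / Real.sqrt (1 - 4 * x) := by
  set ρ : ℝ := (x + 1 / 4) / 2 with hρ_def
  have hρx : x < ρ := by rw [hρ_def]; linarith
  have hρ4 : ρ < 1 / 4 := by rw [hρ_def]; linarith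
  have hρ0 : 0 < ρ := by rw [hρ_def]; linarith
  -- uniform bound on derivatives
  set u : ℕ → ℝ := fun n => ((n : ℝ) + 1) * (4 * ρ) ^ n with hu_def
  have hu : Summable u := by
    have hr : ‖(4 * ρ : ℝ)‖ < 1 := by
      rw [Real.norm_eq_abs, abs_of_nonneg (by linarith)]; linarith
    have h1 := summable_pow_mul_geometric_of_norm_lt_one (R := ℝ) 1 hr
    have h2 := summable_geometric_of_lt_one (r := 4 * ρ) (by linarith) (by linarith)
    simpa [hu_def, add_mul, pow_one] using h1.add h2
  have hderiv : HasDerivAt (fun z => ∑' n : ℕ, catalanC n * z ^ (n + 1))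
      (∑' n : ℕ, ((n : ℝ) + 1) * catalanC n * x ^ n) x := by
    apply hasDerivAt_tsum_of_isPreconnected hu isOpen_Ioo
      (isPreconnected_Ioo (a := (0:ℝ)) (b := ρ))
      (g := fun n z => catalanC n * z ^ (n + 1))
      (g' := fun n y => ((n : ℝ) + 1) * catalanC n * y ^ n)
      (y₀ := x) ?_ ?_ ?_ ?_ ?_
    · intro n y _
      have h := (hasDerivAt_pow (n + 1) y).const_mul (catalanC n)
      have he : catalanC n * ((↑(n + 1) : ℝ) * y ^ (n + 1 - 1)) = ((n : ℝ) + 1) * catalanC n * y ^ n := by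
        push_cast; ring_nf
      rwa [he] at h
    · intro n y hy
      obtain ⟨hy0, hyρ⟩ := hy
      have hcn := catalanC_nonneg n
      rw [Real.norm_eq_abs, abs_of_nonneg (by positivity)]
      calc ((n : ℝ) + 1) * catalanC n * y ^ n
          ≤ ((n : ℝ) + 1) * (4 ^ n) * ρ ^ n := by
            apply mul_le_mul
            · exact mul_le_mul_of_nonneg_left (catalanC_le_four_pow n) (by positivity)
            · exact pow_le_pow_left₀ hy0.le hyρ.le n
            · positivity
            · positivity
        _ = u n := by simp only [hu_def, mul_pow]; ring
    · exact ⟨hx0, hρx⟩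
    · have := (summable_cat hx0.le hx).mul_left x
      apply this.congr
      intro n
      show x * (catalanC n * x ^ n) = catalanC n * x ^ (n + 1)
      rw [pow_succ]; ring
    · exact ⟨hx0, hρx⟩
  -- the closed form
  have h14 : (0:ℝ) < 1 - 4 * x := by linarith
  have hsq : HasDerivAt (fun z : ℝ => (1 - Real.sqrt (1 - 4 * z)) / 2)
      (1 / Real.sqrt (1 - 4 * x)) x := by
    have hinner : HasDerivAt (fun z : ℝ => 1 - 4 * z) (-4) x := by
      simpa using ((hasDerivAt_id x).const_mul (4:ℝ)).const_sub 1
    have h := (Real.hasDerivAt_sqrt (by linarith : 1 - 4 * x ≠ 0)).comp x hinner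
    have h2 := (h.const_sub 1).div_const 2
    refine HasDerivAt.congr_deriv h2 ?_
    have hs0 : 0 < Real.sqrt (1 - 4 * x) := Real.sqrt_pos.mpr h14
    field_simp
    ring
  -- equality of functions near x
  have hEq : (fun z => ∑' n : ℕ, catalanC n * z ^ (n + 1)) =ᶠ[nhds x]
      (fun z : ℝ => (1 - Real.sqrt (1 - 4 * z)) / 2) := by
    filter_upwards [Ioo_mem_nhds hx0 hx] with z hz
    obtain ⟨hz0, hz4⟩ := hz
    have hg := catalanGF_tsum hz0.le hz4
    have : ∑' n : ℕ, catalanC n * z ^ (n + 1) = z * ∑' n : ℕ, catalanC n * z ^ n := by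
      rw [← tsum_mul_left]
      apply tsum_congr
      intro n
      rw [pow_succ]; ring
    rw [this, hg, catalanGF, if_neg (ne_of_gt hz0)]
    field_simp
  have hderiv2 : HasDerivAt (fun z => ∑' n : ℕ, catalanC n * z ^ (n + 1))
      (1 / Real.sqrt (1 - 4 * x)) x := by
    exact (Filter.EventuallyEq.hasDerivAt_iff hEq).mpr hsq
  exact hderiv.unique hderiv2

/-- The long-term apparent hashrate of the Equal-Fork Stubborn miner:
`E[Z] / E[L] = q/p - ((1-γ)(p-q))/(γp) · (1 - p Ĉ((1-γ) pq))`, where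
`E[Z] = ∑ₙ p (pq)^n C_n (n + 1 - (1 - (1-γ)^(n+1))/γ)` and `E[L] = p/(p-q)`. -/
theorem efsm_apparent_hashrate (q p γ : ℝ) (hq0 : 0 < q) (hq : q < 1 / 2)
    (hp : p = 1 - q) (hγ0 : 0 < γ) (hγ1 : γ ≤ 1) :
    (∑' n : ℕ, p * (p * q) ^ n * catalanC n *
        ((n : ℝ) + 1 - (1 - (1 - γ) ^ (n + 1)) / γ)) / (p / (p - q)) =
      q / p - (1 - γ) * (p - q) / (γ * p) * (1 - p * catalanGF ((1 - γ) * p * q)) := by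
  have hp0 : 0 < p := by rw [hp]; linarith
  have hpq : 0 < p - q := by rw [hp]; linarith
  have hx0 : 0 < p * q := mul_pos hp0 hq0
  have hx4 : p * q < 1 / 4 := by rw [hp]; nlinarith
  have hγ' : 0 ≤ 1 - γ := by linarith
  have hw0 : 0 ≤ (1 - γ) * p * q := by positivity
  have hw4 : (1 - γ) * p * q < 1 / 4 := by nlinarith
  -- the three series values
  have hS1 : ∑' n : ℕ, ((n : ℝ) + 1) * catalanC n * (p * q) ^ n = 1 / (p - q) := by
    rw [centralBinom_tsum hx0 hx4]
    congr 1
    have h : 1 - 4 * (p * q) = (p - q) ^ 2 := by rw [hp]; ring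
    rw [h, Real.sqrt_sq hpq.le]
  have hS2 : ∑' n : ℕ, catalanC n * (p * q) ^ n = 1 / p := by
    rw [catalanGF_tsum hx0.le hx4, catalanGF, if_neg (ne_of_gt hx0)]
    have h : 1 - 4 * (p * q) = (p - q) ^ 2 := by rw [hp]; ring
    rw [h, Real.sqrt_sq hpq.le]
    rw [hp]
    rw [div_eq_div_iff (by nlinarith) (by linarith)]
    ring
  have hS3 : ∑' n : ℕ, catalanC n * ((1 - γ) * p * q) ^ n = catalanGF ((1 - γ) * p * q) :=
    catalanGF_tsum hw0 hw4
  -- summability of the pieces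
  have hsum1 : Summable (fun n : ℕ => p * (((n : ℝ) + 1) * catalanC n * (p * q) ^ n)) :=
    (summable_cat' hx0.le hx4).mul_left p
  have hsum2 : Summable (fun n : ℕ => (p / γ) * (catalanC n * (p * q) ^ n)) :=
    (summable_cat hx0.le hx4).mul_left _
  have hsum3 : Summable (fun n : ℕ => (p * (1 - γ) / γ) * (catalanC n * ((1 - γ) * p * q) ^ n)) :=
    (summable_cat hw0 hw4).mul_left _
  -- rewrite the summand
  have hterm : ∀ n : ℕ, p * (p * q) ^ n * catalanC n *
      ((n : ℝ) + 1 - (1 - (1 - γ) ^ (n + 1)) / γ) =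
      p * (((n : ℝ) + 1) * catalanC n * (p * q) ^ n)
        - (p / γ) * (catalanC n * (p * q) ^ n)
        + (p * (1 - γ) / γ) * (catalanC n * ((1 - γ) * p * q) ^ n) := by
    intro n
    have h1 : ((1 - γ) * p * q) ^ n = (1 - γ) ^ n * (p * q) ^ n := by
      rw [mul_assoc, mul_pow]
    rw [h1, pow_succ]
    field_simp
    ring
  rw [tsum_congr hterm, Summable.tsum_add (hsum1.sub hsum2) hsum3, Summable.tsum_sub hsum1 hsum2,
    tsum_mul_left, tsum_mul_left, tsum_mul_left, hS1, hS2, hS3]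
  have hγne : γ ≠ 0 := ne_of_gt hγ0
  have hpne : p ≠ 0 := ne_of_gt hp0
  have hpqne : p - q ≠ 0 := ne_of_gt hpq
  field_simp
  ring
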